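/- Let κ_b, β_b > 0, μ_b ≥ 0, M_{b,0} ≥ 0, and let φ : [0,∞) → ℝ be continuous with 0 ≤ φ(t) ≤ 1 for all t ≥ 0. Suppose y : [0,∞) → ℝ is differentiable and satisfies y'(t) = κ_b·(φ(t)/(1+φ(t)))·(1−φ(t)) − (μ_b φ(t) + β_b)·y(t) for all t ≥ 0, with 0 ≤ y(0) ≤ M_{b,0}. Then 0 ≤ y(t) ≤ max{M_{b,0}, κ_b/β_b} for all t ≥ 0. -/
import Mathlib

open Set

/-- invariant upper bound for the bound-MMP density y = c_b(1−φ):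
if y' = κ_b·(φ/(1+φ))·(1−φ) − (μ_b φ + β_b) y with 0 ≤ φ ≤ 1 and 0 ≤ y(0) ≤ M_{b,0},
then 0 ≤ y(t) ≤ max{M_{b,0}, κ_b/β_b} for all t ≥ 0. -/
theorem bound_mmp_invariant_region
    (κb βb μb Mb0 : ℝ)
    (hκb : 0 < κb) (hβb : 0 < βb) (hμb : 0 ≤ μb) (hMb0 : 0 ≤ Mb0)
    (φ y : ℝ → ℝ)
    (hφ_cont : ContinuousOn φ (Set.Ici 0))
    (hφ_range : ∀ t ∈ Set.Ici (0 : ℝ), 0 ≤ φ t ∧ φ t ≤ 1)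
    (hy : ∀ t ∈ Set.Ici (0 : ℝ),
      HasDerivWithinAt y
        (κb * (φ t / (1 + φ t)) * (1 - φ t) - (μb * φ t + βb) * y t) (Set.Ici 0) t)
    (hy0_nonneg : 0 ≤ y 0) (hy0_le : y 0 ≤ Mb0) :
    ∀ t ∈ Set.Ici (0 : ℝ), 0 ≤ y t ∧ y t ≤ max Mb0 (κb / βb) := by
  intro T hT
  set M : ℝ := max Mb0 (κb / βb) with hM
  have hMpos : 0 < M := lt_of_lt_of_le (div_pos hκb hβb) (le_max_right _ _)
  -- continuity of y on Icc 0 T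
  have hycont : ContinuousOn y (Icc (0:ℝ) T) := fun t ht =>
    ((hy t ht.1).continuousWithinAt).mono (fun s hs => hs.1)
  -- the derivative restricted to Ici x for x ≥ 0
  have hy' : ∀ x ∈ Ico (0:ℝ) T,
      HasDerivWithinAt y
        (κb * (φ x / (1 + φ x)) * (1 - φ x) - (μb * φ x + βb) * y x) (Ici x) x :=
    fun x hx => (hy x hx.1).mono (fun s hs => le_trans hx.1 hs)
  -- auxiliary bounds on the production term g x
  have hg_nonneg : ∀ x ∈ Ico (0:ℝ) T, 0 ≤ κb * (φ x / (1 + φ x)) * (1 - φ x) := by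
    intro x hx
    obtain ⟨h0, h1⟩ := hφ_range x hx.1
    have h2 : 0 ≤ φ x / (1 + φ x) := div_nonneg h0 (by linarith)
    exact mul_nonneg (mul_nonneg hκb.le h2) (by linarith)
  have hg_le : ∀ x ∈ Ico (0:ℝ) T, κb * (φ x / (1 + φ x)) * (1 - φ x) ≤ κb := by
    intro x hx
    obtain ⟨h0, h1⟩ := hφ_range x hx.1
    have hd : φ x / (1 + φ x) ≤ 1 := by
      rw [div_le_one (by linarith)]; linarith
    have hd0 : 0 ≤ φ x / (1 + φ x) := div_nonneg h0 (by linarith)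
    have h5 : φ x / (1 + φ x) * (1 - φ x) ≤ 1 := by nlinarith
    calc κb * (φ x / (1 + φ x)) * (1 - φ x) = κb * (φ x / (1 + φ x) * (1 - φ x)) := by ring
      _ ≤ κb * 1 := mul_le_mul_of_nonneg_left h5 hκb.le
      _ = κb := mul_one κb
  -- exponential barriers
  have hexp : ∀ (c : ℝ) (x : ℝ), HasDerivAt (fun t => Real.exp (c * t)) (Real.exp (c * x) * c) x := by
    intro c x
    have h1 : HasDerivAt (fun t : ℝ => c * t) c x := by
      simpa using (hasDerivAt_id x).const_mul c
    exact h1.exp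
  constructor
  · -- nonnegativity: show -y T ≤ ε exp((μb+βb) T) for every ε > 0
    have key : ∀ ε > 0, -y T ≤ ε * Real.exp ((μb + βb) * T) := by
      intro ε hε
      have := image_le_of_deriv_right_lt_deriv_boundary
        (f := fun t => -y t)
        (f' := fun t => -(κb * (φ t / (1 + φ t)) * (1 - φ t) - (μb * φ t + βb) * y t))
        (a := 0) (b := T)
        (hycont.neg)
        (fun x hx => (hy' x hx).neg)
        (B := fun t => ε * Real.exp ((μb + βb) * t))
        (B' := fun t => ε * (Real.exp ((μb + βb) * t) * (μb + βb)))
        (by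
          show -y 0 ≤ ε * Real.exp ((μb + βb) * 0)
          have : (0:ℝ) < ε * Real.exp ((μb + βb) * 0) := by positivity
          linarith)
        (fun x => (hexp (μb + βb) x).const_mul ε)
        ?_ (right_mem_Icc.2 hT)
      · simpa using this
      · intro x hx heq
        obtain ⟨h0, h1⟩ := hφ_range x hx.1
        have hBpos : 0 < ε * Real.exp ((μb + βb) * x) := by positivity
        have hyx : y x < 0 := by
          have : -y x = ε * Real.exp ((μb + βb) * x) := heq
          linarith
        have hg := hg_nonneg x hx
        have hcoef : 0 ≤ μb * φ x + βb := by nlinarith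
        have h1' : -(κb * (φ x / (1 + φ x)) * (1 - φ x) - (μb * φ x + βb) * y x) ≤ 0 := by
          nlinarith
        have h2' : 0 < ε * (Real.exp ((μb + βb) * x) * (μb + βb)) := by positivity
        linarith
    have hny : -y T ≤ 0 := by
      refine le_of_forall_pos_le_add ?_
      intro δ hδ
      have hE : (0:ℝ) < Real.exp ((μb + βb) * T) := Real.exp_pos _
      have := key (δ / Real.exp ((μb + βb) * T)) (by positivity)
      rw [div_mul_cancel₀ _ (ne_of_gt hE)] at this
      linarith
    linarith
  · -- upper bound: y T ≤ M + ε exp(βb T) for every ε > 0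
    have key : ∀ ε > 0, y T ≤ M + ε * Real.exp (βb * T) := by
      intro ε hε
      have := image_le_of_deriv_right_lt_deriv_boundary
        (f := y)
        (f' := fun t => κb * (φ t / (1 + φ t)) * (1 - φ t) - (μb * φ t + βb) * y t)
        (a := 0) (b := T)
        hycont hy'
        (B := fun t => M + ε * Real.exp (βb * t))
        (B' := fun t => ε * (Real.exp (βb * t) * βb))
        (by
          show y 0 ≤ M + ε * Real.exp (βb * 0)
          have h0 : y 0 ≤ M := le_trans hy0_le (le_max_left _ _)
          have : (0:ℝ) < ε * Real.exp (βb * 0) := by positivity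
          linarith)
        (fun x => ((hexp βb x).const_mul ε).const_add M)
        ?_ (right_mem_Icc.2 hT)
      · exact this
      · intro x hx heq
        obtain ⟨h0, h1⟩ := hφ_range x hx.1
        have hEpos : 0 < ε * Real.exp (βb * x) := by positivity
        have hyx : y x = M + ε * Real.exp (βb * x) := heq
        have hκβ : κb ≤ βb * M := by
          rw [hM]
          have : κb / βb ≤ M := le_max_right _ _
          calc κb = βb * (κb / βb) := by field_simp
            _ ≤ βb * M := by
                exact mul_le_mul_of_nonneg_left (le_max_right _ _) hβb.le
        have hg := hg_le x hx
        have hypos : 0 < y x := by rw [hyx]; linarith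
        have hμterm : 0 ≤ μb * φ x * y x := by positivity
        -- f' ≤ κb - βb * y x ≤ -βb*ε*exp < βb*ε*exp = B'
        have : κb * (φ x / (1 + φ x)) * (1 - φ x) - (μb * φ x + βb) * y x
            ≤ κb - βb * y x := by nlinarith
        have h2 : κb - βb * y x ≤ -(βb * (ε * Real.exp (βb * x))) := by
          rw [hyx]; nlinarith
        have h3 : 0 < ε * (Real.exp (βb * x) * βb) := by positivity
        have h4 : βb * (ε * Real.exp (βb * x)) = ε * (Real.exp (βb * x) * βb) := by ring
        linarith [h4 ▸ h2]
    refine le_of_forall_pos_le_add ?_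
    intro δ hδ
    have hE : (0:ℝ) < Real.exp (βb * T) := Real.exp_pos _
    have := key (δ / Real.exp (βb * T)) (by positivity)
    rwa [div_mul_cancel₀ _ (ne_of_gt hE)] at this
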